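/- Let w be a weight on ℝⁿ and suppose that for every axis-parallel rectangle R and measurable A ⊆ R one has (|A|/|R|)^{p_0} ≤ K · w(A)/w(R) for some K ≥ 1 and p_0 ≥ 1. Let M_S^w denote the strong maximal operator with respect to w, M_S^w f(x) := sup_{R ∋ x} (1/w(R)) ∫_R |f| w. Then for every measurable set E and every α with 1 - 1/K < α < 1, the set {x : M_S^w(1_E)(x) > α} is contained in {x : M_S(1_E)(x) > 1 - K^{1/p_0}(1-α)^{1/p_0}}, where M_S is the (Lebesgue) strong maximal operator. -/

import Mathlib

open MeasureTheory Set
open scoped ENNReal NNReal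

/-- The open axis-parallel rectangle (rectangular parallelepiped) determined by `a` and `b`. -/
def rect {n : ℕ} (a b : Fin n → ℝ) : Set (Fin n → ℝ) :=
  Set.univ.pi fun i => Set.Ioo (a i) (b i)

/-- The strong maximal operator on `ℝⁿ` over axis-parallel rectangles. -/
noncomputable def MS {n : ℕ} (f : (Fin n → ℝ) → ℝ) (x : Fin n → ℝ) : ℝ :=
  sSup {r : ℝ | ∃ a b : Fin n → ℝ, (∀ i, x i ∈ Set.Ioo (a i) (b i)) ∧
    r = (volume (rect a b)).toReal⁻¹ * ∫ y in rect a b, |f y|}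

/-- The `w`-measure of a set: `w(S) = ∫_S w`. -/
noncomputable def wInt {n : ℕ} (w : (Fin n → ℝ) → ℝ) (S : Set (Fin n → ℝ)) : ℝ≥0∞ :=
  ∫⁻ x in S, ENNReal.ofReal (w x)

/-- The weighted sharp Tauberian constant of the strong maximal operator. -/
noncomputable def CSw {n : ℕ} (w : (Fin n → ℝ) → ℝ) (α : ℝ) : ℝ≥0∞ :=
  ⨆ (E : Set (Fin n → ℝ)) (_ : MeasurableSet E) (_ : 0 < wInt w E) (_ : wInt w E < ⊤),
    wInt w {x | α < MS (E.indicator 1) x} / wInt w E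

/-- The strong maximal operator with respect to the weight `w`. -/
noncomputable def MSw {n : ℕ} (w f : (Fin n → ℝ) → ℝ) (x : Fin n → ℝ) : ℝ :=
  sSup {r : ℝ | ∃ a b : Fin n → ℝ, (∀ i, x i ∈ Set.Ioo (a i) (b i)) ∧
    r = (∫ y in rect a b, w y)⁻¹ * ∫ y in rect a b, |f y| * w y}

lemma rect_measurable {n : ℕ} (a b : Fin n → ℝ) : MeasurableSet (rect a b) :=
  MeasurableSet.univ_pi fun _ => measurableSet_Ioo

lemma rect_vol_ne_top {n : ℕ} (a b : Fin n → ℝ) : volume (rect a b) ≠ ⊤ := by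
  rw [rect, volume_pi_pi]
  exact (ENNReal.prod_lt_top fun i _ => by simp [Real.volume_Ioo]).ne

lemma int_abs_indicator {n : ℕ} {E : Set (Fin n → ℝ)} (hE : MeasurableSet E)
    (s : Set (Fin n → ℝ)) :
    ∫ y in s, |E.indicator (1 : (Fin n → ℝ) → ℝ) y| = (volume (s ∩ E)).toReal := by
  have h1 : ∀ y, |E.indicator (1 : (Fin n → ℝ) → ℝ) y| = E.indicator 1 y := fun y =>
    abs_of_nonneg (Set.indicator_nonneg (fun _ _ => zero_le_one) y)
  simp_rw [h1]
  rw [setIntegral_indicator hE]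
  simp [Measure.restrict_apply_univ]
  rfl


/-- transference of level sets from the weighted strong maximal operator
to the Lebesgue strong maximal operator under an absorption hypothesis on `w`. -/
theorem stmt13 {n : ℕ} (w : (Fin n → ℝ) → ℝ) (hw : ∀ x, 0 ≤ w x) (hmeas : Measurable w)
    (hloc : LocallyIntegrable w volume) (K p₀ : ℝ) (hK : 1 ≤ K) (hp₀ : 1 ≤ p₀)
    (habs : ∀ a b : Fin n → ℝ, (∀ i, a i < b i) → ∀ A ⊆ rect a b, MeasurableSet A →
      ((volume A).toReal / (volume (rect a b)).toReal) ^ p₀ ≤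
        K * ((∫ x in A, w x) / ∫ x in rect a b, w x)) :
    ∀ E : Set (Fin n → ℝ), MeasurableSet E → ∀ α : ℝ, 1 - 1 / K < α → α < 1 →
      {x | α < MSw w (E.indicator 1) x} ⊆
        {x | 1 - K ^ (1 / p₀) * (1 - α) ^ (1 / p₀) < MS (E.indicator 1) x} := by
  intro E hE α hα1 hα2 x hx
  simp only [mem_setOf_eq] at hx ⊢
  have hK0 : (0:ℝ) < K := lt_of_lt_of_le zero_lt_one hK
  have hα0 : 0 ≤ α := le_trans (sub_nonneg.mpr ((div_le_one hK0).mpr hK)) hα1.le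
  have hp₀pos : 0 < p₀ := lt_of_lt_of_le zero_lt_one hp₀
  simp only [MSw] at hx
  have hne : {r : ℝ | ∃ a b : Fin n → ℝ, (∀ i, x i ∈ Set.Ioo (a i) (b i)) ∧
      r = (∫ y in rect a b, w y)⁻¹ * ∫ y in rect a b, |E.indicator 1 y| * w y}.Nonempty :=
    ⟨_, fun i => x i - 1, fun i => x i + 1,
      fun i => ⟨by show x i - 1 < x i; linarith, by show x i < x i + 1; linarith⟩, rfl⟩
  obtain ⟨r, ⟨a, b, hxab, hreq⟩, hαr⟩ := exists_lt_of_lt_csSup hne hx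
  have hab : ∀ i, a i < b i := fun i => (hxab i).1.trans (hxab i).2
  have hRmeas := rect_measurable a b
  have hVfin := rect_vol_ne_top a b
  -- integrability of w on the rectangle
  have hcomp : IsCompact (Set.pi Set.univ fun i => Set.Icc (a i) (b i)) :=
    isCompact_univ_pi fun _ => isCompact_Icc
  have hwR : IntegrableOn w (rect a b) volume :=
    (hloc.integrableOn_isCompact hcomp).mono_set
      (Set.pi_mono fun i _ => Set.Ioo_subset_Icc_self)
  -- weighted quantities
  set W := ∫ y in rect a b, w y with hWdef
  set WE := ∫ y in rect a b ∩ E, w y with hWEdef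
  set WA := ∫ y in rect a b \ E, w y with hWAdef
  have key : (∫ y in rect a b, |E.indicator (1:(Fin n → ℝ) → ℝ) y| * w y) = WE := by
    have h1 : ∀ y, |E.indicator (1:(Fin n → ℝ) → ℝ) y| * w y = E.indicator w y := by
      intro y; by_cases h : y ∈ E <;> simp [h]
    rw [hWEdef]
    simp_rw [h1]
    exact setIntegral_indicator hE
  have hWE0 : 0 ≤ WE := setIntegral_nonneg (hRmeas.inter hE) fun y _ => hw y
  have hWA0 : 0 ≤ WA := setIntegral_nonneg (hRmeas.diff hE) fun y _ => hw y
  have hdisj : Disjoint (rect a b ∩ E) (rect a b \ E) :=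
    disjoint_sdiff_self_right.mono_left inter_subset_right
  have hsplit : WE + WA = W := by
    rw [hWEdef, hWAdef, hWdef,
      ← setIntegral_union hdisj (hRmeas.diff hE)
        (hwR.mono_set inter_subset_left) (hwR.mono_set diff_subset),
      Set.inter_union_diff]
  have hrW : r = W⁻¹ * WE := by rw [hreq, key]
  rw [hrW] at hαr
  have hWpos : 0 < W := by
    have hW0' : 0 ≤ W := hsplit ▸ add_nonneg hWE0 hWA0
    rcases hW0'.lt_or_eq with h | h
    · exact h
    · exfalso; rw [← h] at hαr; simp at hαr; linarith
  have hWEgt : α * W < WE := by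
    have h2 : α < WE / W := by rwa [inv_mul_eq_div] at hαr
    exact (lt_div_iff₀ hWpos).mp h2
  have hWAlt : WA < (1 - α) * W := by nlinarith
  -- apply the absorption hypothesis
  have hA := habs a b hab (rect a b \ E) diff_subset (hRmeas.diff hE)
  rw [← hWdef, ← hWAdef] at hA
  have hKlt : K * (WA / W) < K * (1 - α) := by
    apply mul_lt_mul_of_pos_left _ hK0
    rw [div_lt_iff₀ hWpos]; linarith
  have hpow : ((volume (rect a b \ E)).toReal / (volume (rect a b)).toReal) ^ p₀
      < K * (1 - α) := lt_of_le_of_lt hA hKlt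
  -- volumes
  set V := (volume (rect a b)).toReal with hVdef
  set vA := (volume (rect a b \ E)).toReal with hvAdef
  set vE := (volume (rect a b ∩ E)).toReal with hvEdef
  have hvAfin : volume (rect a b \ E) ≠ ⊤ :=
    (lt_of_le_of_lt (measure_mono diff_subset) hVfin.lt_top).ne
  have hvEfin : volume (rect a b ∩ E) ≠ ⊤ :=
    (lt_of_le_of_lt (measure_mono inter_subset_left) hVfin.lt_top).ne
  have hvolsplit : vE + vA = V := by
    rw [hvEdef, hvAdef, hVdef, ← ENNReal.toReal_add hvEfin hvAfin,
      measure_inter_add_diff _ hE]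
  have hVpos : 0 < V := by
    have hne0 : volume (rect a b) ≠ 0 := by
      intro h0
      have hW0 : W = 0 := by
        rw [hWdef, Measure.restrict_eq_zero.mpr h0, integral_zero_measure]
      linarith
    exact ENNReal.toReal_pos hne0 hVfin
  have hvA0 : 0 ≤ vA / V := div_nonneg ENNReal.toReal_nonneg hVpos.le
  -- extract the root
  have h6 := Real.rpow_lt_rpow (Real.rpow_nonneg hvA0 p₀) hpow
    (by positivity : (0:ℝ) < 1 / p₀)
  rw [← Real.rpow_mul hvA0, mul_one_div, div_self hp₀pos.ne', Real.rpow_one,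
    Real.mul_rpow hK0.le (by linarith : (0:ℝ) ≤ 1 - α)] at h6
  -- h6 : vA / V < K ^ (1/p₀) * (1-α) ^ (1/p₀)
  -- conclude via MS
  simp only [MS]
  have hbdd : BddAbove {r : ℝ | ∃ a b : Fin n → ℝ, (∀ i, x i ∈ Set.Ioo (a i) (b i)) ∧
      r = (volume (rect a b)).toReal⁻¹ * ∫ y in rect a b, |E.indicator 1 y|} := by
    refine ⟨1, fun r'' hr'' => ?_⟩
    obtain ⟨a', b', -, hr''eq⟩ := hr''
    rw [hr''eq, int_abs_indicator hE]
    set V' := (volume (rect a' b')).toReal with hV'def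
    have hle : (volume (rect a' b' ∩ E)).toReal ≤ V' :=
      ENNReal.toReal_mono (rect_vol_ne_top a' b') (measure_mono inter_subset_left)
    rcases eq_or_ne V' 0 with h | h
    · rw [h]; simp
    · have hV'0 : 0 < V' := lt_of_le_of_ne ENNReal.toReal_nonneg (Ne.symm h)
      calc V'⁻¹ * (volume (rect a' b' ∩ E)).toReal ≤ V'⁻¹ * V' :=
            mul_le_mul_of_nonneg_left hle (inv_nonneg.mpr hV'0.le)
        _ = 1 := inv_mul_cancel₀ h
  have hmem : V⁻¹ * vE ∈ {r : ℝ | ∃ a b : Fin n → ℝ,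
      (∀ i, x i ∈ Set.Ioo (a i) (b i)) ∧
      r = (volume (rect a b)).toReal⁻¹ * ∫ y in rect a b, |E.indicator 1 y|} :=
    ⟨a, b, hxab, by rw [int_abs_indicator hE, ← hVdef, ← hvEdef]⟩
  have hfinal : 1 - K ^ (1 / p₀) * (1 - α) ^ (1 / p₀) < V⁻¹ * vE := by
    rw [inv_mul_eq_div, lt_div_iff₀ hVpos]
    have h8 : vA < (K ^ (1 / p₀) * (1 - α) ^ (1 / p₀)) * V := (div_lt_iff₀ hVpos).mp h6
    nlinarith
  exact lt_of_lt_of_le hfinal (le_csSup hbdd hmem)
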